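/- Let u0 : ℝⁿ → ℝ be Lipschitz and set ũ0 := S_T^-(S_T^+ u0). Then S_T^+ ũ0 = S_T^+ u0, and u0(x) ≥ ũ0(x) for all x ∈ ℝⁿ. -/

import Mathlib

open scoped RealInnerProductSpace
open Filter

noncomputable section

/-- `n`-dimensional Euclidean space. -/
abbrev Euc (n : ℕ) := EuclideanSpace ℝ (Fin n)

/-- A real-valued function on `ℝⁿ` is Lipschitz (with some constant). -/
def IsLip {n : ℕ} (f : Euc n → ℝ) : Prop := ∃ K : NNReal, LipschitzWith K f

/-- The Legendre transform `L(q) = sup_p (⟨q,p⟫ - H(p))`. -/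
def legendre {n : ℕ} (H : Euc n → ℝ) (q : Euc n) : ℝ :=
  ⨆ p : Euc n, (⟪q, p⟫ - H p)

/-- The forward Hopf–Lax operator `(S_T^+ g)(x) = inf_y [g(y) + T·L((x-y)/T)]`. -/
def Splus {n : ℕ} (T : ℝ) (L : Euc n → ℝ) (g : Euc n → ℝ) (x : Euc n) : ℝ :=
  ⨅ y : Euc n, (g y + T * L (T⁻¹ • (x - y)))

/-- The backward operator `(S_T^- g)(x) = sup_y [g(y) - T·L((y-x)/T)]`. -/
def Sminus {n : ℕ} (T : ℝ) (L : Euc n → ℝ) (g : Euc n → ℝ) (x : Euc n) : ℝ :=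
  ⨆ y : Euc n, (g y - T * L (T⁻¹ • (y - x)))

/-- The Hessian of `H` is positive definite at every point. -/
def PosDefHessian {n : ℕ} (H : Euc n → ℝ) : Prop :=
  ∀ p v : Euc n, v ≠ 0 → 0 < iteratedFDeriv ℝ 2 H p ![v, v]

/-- `H` is superlinear: `H(p)/‖p‖ → +∞` as `‖p‖ → +∞`. -/
def Superlinear {n : ℕ} (H : Euc n → ℝ) : Prop :=
  Tendsto (fun p : Euc n => H p / ‖p‖) (cocompact (Euc n)) atTop

/-- Backward stability: with `ũ0 := S_T^-(S_T^+ u0)`, one has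
`S_T^+ ũ0 = S_T^+ u0` and `u0 ≥ ũ0` pointwise. -/
theorem backward_stability
    {n : ℕ} (hn : 0 < n) (T : ℝ) (hT : 0 < T)
    (H : Euc n → ℝ) (hH : ContDiff ℝ 2 H)
    (hHconv : PosDefHessian H) (hHsuper : Superlinear H)
    (u0 : Euc n → ℝ) (hu0 : IsLip u0) :
    Splus T (legendre H) (Sminus T (legendre H) (Splus T (legendre H) u0)) =
        Splus T (legendre H) u0 ∧
      ∀ x : Euc n, Sminus T (legendre H) (Splus T (legendre H) u0) x ≤ u0 x := by
  obtain ⟨K, hK⟩ := hu0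
  set L := legendre H with hLdef
  -- bounded above for the legendre sup
  have hbddA : ∀ q : Euc n, BddAbove (Set.range fun p : Euc n => ⟪q, p⟫ - H p) := by
    intro q
    have hev : ∀ᶠ p : Euc n in cocompact _, ‖q‖ ≤ H p / ‖p‖ :=
      hHsuper.eventually (eventually_ge_atTop ‖q‖)
    rw [Filter.eventually_iff, Filter.mem_cocompact] at hev
    obtain ⟨t, ht, hts⟩ := hev
    have ht' : IsCompact (insert (0 : Euc n) t) := ht.insert 0
    obtain ⟨pm, hpm, hmax⟩ := ht'.exists_isMaxOn (Set.insert_nonempty _ _)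
      (((continuous_const.inner continuous_id).sub hH.continuous).continuousOn)
    refine ⟨max (⟪q, pm⟫ - H pm) 0, ?_⟩
    rintro _ ⟨p, rfl⟩
    by_cases hp : p ∈ insert (0 : Euc n) t
    · exact le_max_of_le_left (hmax hp)
    · have hp0 : p ≠ 0 := fun h => hp (h ▸ Set.mem_insert _ _)
      have hpt : p ∉ t := fun h => hp (Set.mem_insert_of_mem _ h)
      have h1 : ‖q‖ ≤ H p / ‖p‖ := hts (by simpa using hpt)
      have hnp : (0 : ℝ) < ‖p‖ := norm_pos_iff.mpr hp0
      have h2 : ‖q‖ * ‖p‖ ≤ H p := by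
        rw [le_div_iff₀ hnp] at h1; linarith
      have h3 : ⟪q, p⟫ ≤ ‖q‖ * ‖p‖ := real_inner_le_norm q p
      refine le_max_of_le_right ?_
      show ⟪q, p⟫ - H p ≤ 0
      linarith
  set c : ℝ := (K : ℝ) + 1 with hcdef
  have hc : 0 < c := by positivity
  obtain ⟨pC, hpC, hCm⟩ := (isCompact_closedBall (0 : Euc n) c).exists_isMaxOn
    ⟨0, by simp [hc.le]⟩ hH.continuous.continuousOn
  set C := H pC with hCdef
  -- lower bound on the legendre transform
  have hLlb : ∀ q : Euc n, c * ‖q‖ - C ≤ L q := by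
    intro q
    rcases eq_or_ne q 0 with rfl | hq
    · have h1 : ⟪(0 : Euc n), (0 : Euc n)⟫ - H 0 ≤ L 0 := le_ciSup (hbddA 0) 0
      have h0 : H 0 ≤ C := hCm (by simp [hc.le])
      simp only [inner_zero_left, zero_sub] at h1
      simp only [norm_zero, mul_zero, zero_sub]
      linarith
    · have hq0 : (0 : ℝ) < ‖q‖ := norm_pos_iff.mpr hq
      set p : Euc n := (c * ‖q‖⁻¹) • q with hpdef
      have hnp : ‖p‖ = c := by
        rw [hpdef, norm_smul, Real.norm_eq_abs,
          abs_of_pos (by positivity : (0:ℝ) < c * ‖q‖⁻¹)]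
        field_simp
      have hip : ⟪q, p⟫ = c * ‖q‖ := by
        rw [hpdef, real_inner_smul_right, real_inner_self_eq_norm_mul_norm]
        field_simp
      have hHp : H p ≤ C := hCm (by simp [Metric.mem_closedBall, hnp])
      have h1 : ⟪q, p⟫ - H p ≤ L q := le_ciSup (hbddA q) p
      rw [hip] at h1
      linarith
  have hTL : ∀ w : Euc n, c * ‖w‖ - T * C ≤ T * L (T⁻¹ • w) := by
    intro w
    have hnw : ‖T⁻¹ • w‖ = T⁻¹ * ‖w‖ := by
      rw [norm_smul, Real.norm_eq_abs, abs_of_pos (inv_pos.mpr hT)]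
    have h1 := hLlb (T⁻¹ • w)
    rw [hnw] at h1
    have h2 := mul_le_mul_of_nonneg_left h1 hT.le
    have h3 : T * (c * (T⁻¹ * ‖w‖) - C) = c * ‖w‖ - T * C := by
      field_simp
    linarith
  -- BddBelow for the Splus infimum
  have hbddB : ∀ x : Euc n,
      BddBelow (Set.range fun y : Euc n => u0 y + T * L (T⁻¹ • (x - y))) := by
    intro x
    refine ⟨u0 x - T * C, ?_⟩
    rintro _ ⟨y, rfl⟩
    show u0 x - T * C ≤ u0 y + T * L (T⁻¹ • (x - y))
    have h1 := hTL (x - y)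
    have h2 : |u0 y - u0 x| ≤ (K : ℝ) * ‖x - y‖ := by
      have := hK.dist_le_mul y x
      rw [Real.dist_eq, dist_eq_norm, ← norm_sub_rev] at this
      exact this
    have habs := (abs_le.mp h2).1
    have h4 : (K : ℝ) * ‖x - y‖ ≤ c * ‖x - y‖ := by
      have := norm_nonneg (x - y); nlinarith
    nlinarith [h1, habs, h4]
  have hvle : ∀ x y : Euc n,
      Splus T L u0 y ≤ u0 x + T * L (T⁻¹ • (y - x)) := fun x y => ciInf_le (hbddB y) x
  have hbddC : ∀ y : Euc n,
      BddAbove (Set.range fun z : Euc n => Splus T L u0 z - T * L (T⁻¹ • (z - y))) := by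
    intro y
    refine ⟨u0 y, ?_⟩
    rintro _ ⟨z, rfl⟩
    linarith [hvle y z]
  have hwle : ∀ y : Euc n, Sminus T L (Splus T L u0) y ≤ u0 y := by
    intro y
    exact ciSup_le fun z => by linarith [hvle y z]
  have hkey : ∀ x y : Euc n,
      Splus T L u0 x ≤ Sminus T L (Splus T L u0) y + T * L (T⁻¹ • (x - y)) := by
    intro x y
    have h1 : Splus T L u0 x - T * L (T⁻¹ • (x - y)) ≤ Sminus T L (Splus T L u0) y :=
      le_ciSup (hbddC y) x
    linarith
  refine ⟨?_, hwle⟩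
  funext x
  apply le_antisymm
  · apply ciInf_mono
    · exact ⟨Splus T L u0 x, by rintro _ ⟨y, rfl⟩; exact hkey x y⟩
    · intro y
      have := hwle y
      linarith
  · exact le_ciInf fun y => hkey x y
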